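/- Let α = (α_1,…,α_n) be a composition, let λ and μ be distinct hooks with |λ| = |μ| = h ≤ n + k and arm lengths satisfying λ_a < μ_a ≤ ⌈h/2⌉, and let 0 ≤ k ≤ h. Then the difference s_{S(μ,α;k)} − s_{S(λ,α;k)} is not Schur-positive. In particular, there is a Schur function s_ν appearing in s_{S(λ,α;k)} with positive coefficient which cannot appear in s_{S(μ,α;k)}, because the diagram S(λ,α;k) has more rows than S(μ,α;k). -/

import Mathlib

open Finset

namespace SchurStair

/-- A diagram is a finite set of cells `(row, column)`, with row `0` at the top. -/
abbrev Diagram := Finset (ℕ × ℕ)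

/-- `T` is a semistandard filling of `D`: positive entries, rows weakly increase
left to right, columns strictly increase top to bottom. -/
def IsSSYT (D : Diagram) (T : ℕ × ℕ → ℕ) : Prop :=
  (∀ x ∈ D, 1 ≤ T x) ∧
  (∀ i j : ℕ, (i, j) ∈ D → (i, j + 1) ∈ D → T (i, j) ≤ T (i, j + 1)) ∧
  (∀ i j : ℕ, (i, j) ∈ D → (i + 1, j) ∈ D → T (i, j) < T (i + 1, j))

/-- The content of a filling: `content D T v` is the number of cells of `D`
with entry `v`. -/
def content (D : Diagram) (T : ℕ × ℕ → ℕ) : ℕ → ℕ :=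
  fun v => (D.filter fun x => T x = v).card

/-- `y` is read at or before `x` in the reading word
(rows right to left, proceeding from the top row to the bottom). -/
def ReadBefore (x y : ℕ × ℕ) : Prop :=
  y.1 < x.1 ∨ (y.1 = x.1 ∧ x.2 ≤ y.2)

open Classical in
/-- The reading word of `T` on `D` is lattice: in every prefix, the number of
`v+1`'s read is at least the number of `v+2`'s read. -/
def IsLattice (D : Diagram) (T : ℕ × ℕ → ℕ) : Prop :=
  ∀ x ∈ D, ∀ v : ℕ,
    (D.filter fun y => ReadBefore x y ∧ T y = v + 2).card ≤
      (D.filter fun y => ReadBefore x y ∧ T y = v + 1).card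

/-- The semistandard Young tableaux of shape `D` and content `c`
(normalized to be `0` off `D`). -/
def SSYTs (D : Diagram) (c : ℕ → ℕ) : Set ((ℕ × ℕ) → ℕ) :=
  {T | IsSSYT D T ∧ (∀ x ∉ D, T x = 0) ∧ content D T = c}

/-- The SSYT of shape `D` and content `c` whose reading word is lattice. -/
def LatticeSSYTs (D : Diagram) (c : ℕ → ℕ) : Set ((ℕ × ℕ) → ℕ) :=
  {T | T ∈ SSYTs D c ∧ IsLattice D T}

/-- The coefficient of the monomial `x^c` in the skew Schur function `s_D`. -/
noncomputable def ssytCount (D : Diagram) (c : ℕ → ℕ) : ℕ := (SSYTs D c).ncard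

/-- By the Littlewood–Richardson rule, the coefficient of the Schur function
`s_c` in the Schur expansion of `s_D`. -/
noncomputable def lrCount (D : Diagram) (c : ℕ → ℕ) : ℕ := (LatticeSSYTs D c).ncard

/-- `s_{D₁} - s_{D₂}` is Schur-positive (phrased via the LR rule). -/
def SchurPos (D₁ D₂ : Diagram) : Prop := ∀ c : ℕ → ℕ, lrCount D₂ c ≤ lrCount D₁ c

/-- `α` encodes a composition `(α_1, …, α_n)`: the 1-based part `α_i` is `α (i-1)`. -/
def IsComposition (n : ℕ) (α : ℕ → ℕ) : Prop := ∀ i < n, 0 < α i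

/-- Height of column `c` (0-based) of the staircase `δ_α`. -/
def stairColHt (n : ℕ) (α : ℕ → ℕ) (c : ℕ) : ℕ := ∑ i ∈ Finset.Ico c n, α i

/-- The number of rows `|α|` of the fat staircases `δ_α`, `Δ_α`. -/
def stairLen (n : ℕ) (α : ℕ → ℕ) : ℕ := ∑ i ∈ Finset.range n, α i

/-- Row lengths of the staircase partition `δ_α = (n^{α_n}, …, 1^{α_1})`. -/
def deltaPart (n : ℕ) (α : ℕ → ℕ) : ℕ → ℕ :=
  fun r => ((Finset.range n).filter fun c => r < stairColHt n α c).card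

/-- The rotated fat staircase `Δ_α`, inside its `|α| × n` bounding box. -/
def deltaUp (n : ℕ) (α : ℕ → ℕ) : Diagram :=
  (Finset.range (stairLen n α) ×ˢ Finset.range n).filter fun x =>
    stairLen n α ≤ x.1 + stairColHt n α (n - 1 - x.2)

/-- Cells of a partition `lam` (with at most `m` parts), top-left justified. -/
def partCells (m : ℕ) (lam : ℕ → ℕ) : Diagram :=
  (Finset.range m ×ˢ Finset.range (lam 0)).filter fun x => x.2 < lam x.1

/-- Translate a diagram down by `dr` and right by `dc`. -/
def shiftD (D : Diagram) (dr dc : ℕ) : Diagram := D.image fun x => (x.1 + dr, x.2 + dc)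

/-- The fat staircase with bad foundation `S(λ, α; k)`: the foundation `lam`
(at most `m` parts) is placed immediately below `Δ_α`, its first row beginning
one box below and `k` boxes left of the bottom-left box of `Δ_α`, so that
the rows overlap in `lam 0 - k` column positions. -/
def shapeS (n : ℕ) (α : ℕ → ℕ) (m : ℕ) (lam : ℕ → ℕ) (k : ℕ) : Diagram :=
  shiftD (deltaUp n α) 0 k ∪ shiftD (partCells m lam) (stairLen n α) 0

/-- The direct sum `λ ⊕ Δ_α` (disconnected, `λ` to the lower left). -/
def dsumS (n : ℕ) (α : ℕ → ℕ) (m : ℕ) (lam : ℕ → ℕ) : Diagram :=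
  shiftD (deltaUp n α) 0 (lam 0) ∪ shiftD (partCells m lam) (stairLen n α) 0

/-- The hook `(a, 1^{l-1})` as a partition. -/
def hookPart (a l : ℕ) : ℕ → ℕ :=
  fun i => if i = 0 then a else if i < l then 1 else 0

/-- The set `R_{α,k}` of possible first-row foundation entries:
`{1 + α_n + ⋯ + α_{n+1-j} : 1 ≤ j ≤ n}`, together with `1` when `k > 0`. -/
def Rfin (n : ℕ) (α : ℕ → ℕ) (k : ℕ) : Finset ℕ :=
  ((Finset.Icc 1 n).image fun j => 1 + ∑ i ∈ Finset.Ico (n - j) n, α i) ∪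
    (if 0 < k then {1} else ∅)

/-- The complement `p^c` of a partition `p` in the rectangle `(b^a)`
(`a` rows of width `b`): the 180° rotation of `(b^a) / p`. -/
def complementPart (a b : ℕ) (p : ℕ → ℕ) : ℕ → ℕ :=
  fun i => if i < a then b - p (a - 1 - i) else 0

/-- Cells of the skew diagram `p / q`, where `p` has at most `a` parts. -/
def skewCells (a : ℕ) (p q : ℕ → ℕ) : Diagram :=
  (Finset.range a ×ˢ Finset.range (p 0)).filter fun x => q x.1 ≤ x.2 ∧ x.2 < p x.1

/-- Extend a tuple `Fin a → Fin (b+1)` to a function `ℕ → ℕ` (zero beyond `a`);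
used to enumerate the partitions contained in the rectangle `(b^a)`. -/
def extFun (a b : ℕ) (f : Fin a → Fin (b + 1)) : ℕ → ℕ :=
  fun i => if h : i < a then (f ⟨i, h⟩ : ℕ) else 0

/-- The content function of a partition `p`: the entry `v ≥ 1` occurs `p (v-1)` times. -/
def partContent (p : ℕ → ℕ) : ℕ → ℕ := fun v => if v = 0 then 0 else p (v - 1)

open Classical in
/-- The Littlewood–Richardson coefficient `c^ν_{κσ}` (with `ν` a partition of at
most `a` parts): the number of lattice SSYT of shape `ν/κ` and content `σ`. -/
noncomputable def lrCoeff (a : ℕ) (ν κ : ℕ → ℕ) (σ : ℕ → ℕ) : ℕ :=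
  if ∀ i, κ i ≤ ν i then lrCount (skewCells a ν κ) σ else 0

open Classical in
/-- The truncated complement, in the rectangle `(b^a)`, of the symmetric function
with Schur coefficient family `F`: `c(∑_ν F(ν) s_ν) = ∑_{ν ⊆ (b^a)} F(ν) s_{ν^c}`,
expressed as a monomial-coefficient (content-counting) function. -/
noncomputable def truncComplement (a b : ℕ) (F : (ℕ → ℕ) → ℕ) : (ℕ → ℕ) → ℕ :=
  fun c => ∑ ν : Fin a → Fin (b + 1),
    if Antitone (extFun a b ν) then
      F (extFun a b ν) *
        ssytCount (skewCells a (complementPart a b (extFun a b ν)) fun _ => 0) c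
    else 0

/-- `D` is a skew diagram: row `i` occupies the columns `g i ≤ j < f i` for
nested partitions `g ⊆ f`. -/
def IsSkew (D : Diagram) : Prop :=
  ∃ f g : ℕ → ℕ, Antitone f ∧ Antitone g ∧ (∀ i, g i ≤ f i) ∧
    ∀ x : ℕ × ℕ, x ∈ D ↔ g x.1 ≤ x.2 ∧ x.2 < f x.1

/-- One more than the largest row index of `D`. -/
def diagHeight (D : Diagram) : ℕ := D.sup fun x => x.1 + 1

/-- One more than the largest column index of `D`. -/
def diagWidth (D : Diagram) : ℕ := D.sup fun x => x.2 + 1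

/-- The direct sum `D₁ ⊕ D₂`: `D₂` placed above and to the right of `D₁`. -/
def directSum (D₁ D₂ : Diagram) : Diagram :=
  shiftD D₁ (diagHeight D₂) 0 ∪ shiftD D₂ 0 (diagWidth D₁)

/-- The 180° rotation `D°` of a diagram (within its bounding box). -/
def rotateD (D : Diagram) : Diagram :=
  D.image fun x => (diagHeight D - 1 - x.1, diagWidth D - 1 - x.2)

end SchurStair

namespace SchurStair

section Aux

lemma mem_shiftD {D : Diagram} {dr dc : ℕ} {x : ℕ × ℕ} :
    x ∈ shiftD D dr dc ↔ dr ≤ x.1 ∧ dc ≤ x.2 ∧ (x.1 - dr, x.2 - dc) ∈ D := by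
  simp only [shiftD, Finset.mem_image]
  constructor
  · rintro ⟨y, hy, rfl⟩
    simpa using hy
  · rintro ⟨h1, h2, h3⟩
    exact ⟨(x.1 - dr, x.2 - dc), h3, by simp [Nat.sub_add_cancel h1, Nat.sub_add_cancel h2]⟩

lemma mem_deltaUp {n : ℕ} {α : ℕ → ℕ} {x : ℕ × ℕ} :
    x ∈ deltaUp n α ↔ x.1 < stairLen n α ∧ x.2 < n ∧
      stairLen n α ≤ x.1 + stairColHt n α (n - 1 - x.2) := by
  simp [deltaUp, and_assoc]

lemma mem_partCells {m : ℕ} {lam : ℕ → ℕ} {x : ℕ × ℕ} :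
    x ∈ partCells m lam ↔ x.1 < m ∧ x.2 < lam 0 ∧ x.2 < lam x.1 := by
  simp [partCells, and_assoc]

lemma hookPart_zero {a l : ℕ} : hookPart a l 0 = a := rfl

lemma mem_shapeS_hook {n k a l : ℕ} {α : ℕ → ℕ} (ha : 1 ≤ a) (hl : 1 ≤ l) {x : ℕ × ℕ} :
    x ∈ shapeS n α l (hookPart a l) k ↔
      (x.1 < stairLen n α ∧ k ≤ x.2 ∧ x.2 - k < n ∧
        stairLen n α ≤ x.1 + stairColHt n α (n - 1 - (x.2 - k)))
      ∨ (x.1 = stairLen n α ∧ x.2 < a)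
      ∨ (stairLen n α < x.1 ∧ x.1 < stairLen n α + l ∧ x.2 = 0) := by
  set L := stairLen n α
  rw [shapeS, Finset.mem_union, mem_shiftD, mem_shiftD, mem_deltaUp, mem_partCells]
  simp only [Nat.le_zero, Nat.sub_zero, hookPart_zero, zero_le, true_and]
  constructor
  · rintro (⟨h1, h2, h3, h4⟩ | ⟨h1, h2, h3, h4⟩)
    · exact Or.inl ⟨h2, h1, h3, h4⟩
    · rcases Nat.eq_or_lt_of_le h1 with h | h
      · refine Or.inr (Or.inl ⟨h.symm, ?_⟩)
        have : x.1 - L = 0 := by omega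
        rw [this] at h4
        simpa [hookPart] using h4
      · refine Or.inr (Or.inr ⟨h, by omega, ?_⟩)
        have hne : ¬ (x.1 - L = 0) := by omega
        rcases Nat.lt_or_ge (x.1 - L) l with h5 | h5
        · simp only [hookPart, if_neg (show ¬ (x.1 - stairLen n α = 0) from hne),
            if_pos (show x.1 - stairLen n α < l from h5)] at h4
          omega
        · simp only [hookPart, if_neg hne, if_neg (by omega : ¬ x.1 - L < l)] at h4
          omega
  · rintro (⟨h1, h2, h3, h4⟩ | ⟨h1, h2⟩ | ⟨h1, h2, h3⟩)
    · exact Or.inl ⟨h2, h1, h3, h4⟩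
    · refine Or.inr ⟨le_of_eq h1.symm, by omega, h2, ?_⟩
      have : x.1 - L = 0 := by omega
      rw [this]
      simpa [hookPart] using h2
    · refine Or.inr ⟨by omega, by omega, by omega, ?_⟩
      have hne : ¬ (x.1 - L = 0) := by omega
      simp only [hookPart, if_neg (show ¬ (x.1 - stairLen n α = 0) from hne),
        if_pos (show x.1 - stairLen n α < l from (by omega : x.1 - L < l))]
      omega

lemma stairColHt_le_stairLen {n : ℕ} {α : ℕ → ℕ} {c : ℕ} :
    stairColHt n α c ≤ stairLen n α := by
  rw [stairColHt, stairLen, Finset.range_eq_Ico]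
  exact Finset.sum_le_sum_of_subset (Finset.Ico_subset_Ico (Nat.zero_le _) le_rfl)

lemma stairColHt_anti {n : ℕ} {α : ℕ → ℕ} {a b : ℕ} (hab : a ≤ b) :
    stairColHt n α b ≤ stairColHt n α a :=
  Finset.sum_le_sum_of_subset (Finset.Ico_subset_Ico hab le_rfl)

lemma stairColHt_pos {n : ℕ} {α : ℕ → ℕ} (hα : IsComposition n α) (hn : 0 < n)
    {c : ℕ} (hc : c ≤ n - 1) : 0 < stairColHt n α c := by
  have h1 : n - 1 ∈ Finset.Ico c n := by
    rw [Finset.mem_Ico]; omega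
  calc 0 < α (n - 1) := hα _ (by omega)
    _ ≤ _ := Finset.single_le_sum (fun i _ => Nat.zero_le _) h1

lemma stairColHt_zero {n : ℕ} {α : ℕ → ℕ} : stairColHt n α 0 = stairLen n α := by
  rw [stairColHt, stairLen, Finset.range_eq_Ico]

lemma stairColHt_lt {n : ℕ} {α : ℕ → ℕ} (hα : IsComposition n α) {c : ℕ}
    (hc : 0 < c) (hcn : c < n) : stairColHt n α c < stairLen n α := by
  rw [stairLen, Finset.range_eq_Ico]
  have : Finset.Ico 0 n = Finset.Ico 0 c ∪ Finset.Ico c n := by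
    rw [Finset.Ico_union_Ico_eq_Ico (Nat.zero_le _) (le_of_lt hcn)]
  rw [this, Finset.sum_union (by
    apply Finset.Ico_disjoint_Ico_consecutive)]
  rw [stairColHt]
  have : 0 < ∑ i ∈ Finset.Ico 0 c, α i := by
    calc 0 < α 0 := hα _ (by omega)
      _ ≤ _ := Finset.single_le_sum (fun i _ => Nat.zero_le _) (by rw [Finset.mem_Ico]; omega)
  omega

/-- Rows of a diagram are intervals. -/
def RowsInterval (D : Diagram) : Prop :=
  ∀ i j1 j j2 : ℕ, (i, j1) ∈ D → (i, j2) ∈ D → j1 ≤ j → j ≤ j2 → (i, j) ∈ D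

lemma rowsInterval_shapeS_hook {n k a l : ℕ} {α : ℕ → ℕ} (ha : 1 ≤ a) (hl : 1 ≤ l) :
    RowsInterval (shapeS n α l (hookPart a l) k) := by
  intro i j1 j j2 h1 h2 hj1 hj2
  rw [mem_shapeS_hook ha hl] at h1 h2 ⊢
  rcases h1 with ⟨g1, g2, g3, g4⟩ | ⟨g1, g2⟩ | ⟨g1, g2, g3⟩
  · rcases h2 with ⟨f1, f2, f3, f4⟩ | ⟨f1, f2⟩ | ⟨f1, f2, f3⟩
    · refine Or.inl ⟨g1, by omega, by omega, ?_⟩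
      calc stairLen n α ≤ i + stairColHt n α (n - 1 - (j1 - k)) := g4
        _ ≤ i + stairColHt n α (n - 1 - (j - k)) := by
            exact Nat.add_le_add_left (stairColHt_anti (by omega)) i
    · omega
    · omega
  · rcases h2 with ⟨f1, f2, f3, f4⟩ | ⟨f1, f2⟩ | ⟨f1, f2, f3⟩
    · omega
    · exact Or.inr (Or.inl ⟨g1, by omega⟩)
    · omega
  · rcases h2 with ⟨f1, f2, f3, f4⟩ | ⟨f1, f2⟩ | ⟨f1, f2, f3⟩
    · omega
    · omega
    · exact Or.inr (Or.inr ⟨g1, g2, by omega⟩)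

lemma row_lt_shapeS_hook {n k a l : ℕ} {α : ℕ → ℕ} (ha : 1 ≤ a) (hl : 1 ≤ l)
    {x : ℕ × ℕ} (hx : x ∈ shapeS n α l (hookPart a l) k) :
    x.1 < stairLen n α + l := by
  rw [mem_shapeS_hook ha hl] at hx
  rcases hx with ⟨h1, _⟩ | ⟨h1, _⟩ | ⟨_, h2, _⟩ <;> omega

lemma row_mono {D : Diagram} {T : ℕ × ℕ → ℕ} (hD : RowsInterval D) (hT : IsSSYT D T) :
    ∀ i j1 j2 : ℕ, (i, j1) ∈ D → (i, j2) ∈ D → j1 ≤ j2 → T (i, j1) ≤ T (i, j2) := by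
  intro i j1 j2
  induction j2 with
  | zero => intro h1 h2 hle; interval_cases j1; exact le_rfl
  | succ j ih =>
    intro h1 h2 hle
    rcases Nat.eq_or_lt_of_le hle with h | h
    · subst h; exact le_rfl
    · have hmem : (i, j) ∈ D := hD i j1 j (j+1) h1 h2 (by omega) (by omega)
      exact le_trans (ih h1 hmem (by omega)) (hT.2.1 i j hmem h2)

/-- Key lemma: in a lattice SSYT on a diagram with interval rows,
every entry is at most its row index plus one. -/
lemma entry_le_row {D : Diagram} {T : ℕ × ℕ → ℕ} (hD : RowsInterval D)
    (hT : IsSSYT D T) (hL : IsLattice D T) :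
    ∀ v : ℕ, ∀ x ∈ D, T x = v + 1 → v ≤ x.1 := by
  intro v
  induction v with
  | zero => intro x hx _; exact Nat.zero_le _
  | succ v ih =>
    intro x hx hTx
    have hcard := hL x hx v
    classical
    have hxmem : x ∈ D.filter fun y => ReadBefore x y ∧ T y = v + 2 := by
      rw [Finset.mem_filter]
      exact ⟨hx, Or.inr ⟨rfl, le_rfl⟩, hTx⟩
    have hpos : 0 < (D.filter fun y => ReadBefore x y ∧ T y = v + 2).card :=
      Finset.card_pos.mpr ⟨x, hxmem⟩
    have : 0 < (D.filter fun y => ReadBefore x y ∧ T y = v + 1).card := by omega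
    obtain ⟨y, hy⟩ := Finset.card_pos.mp this
    rw [Finset.mem_filter] at hy
    obtain ⟨hyD, hyR, hyT⟩ := hy
    rcases hyR with h | ⟨h1, h2⟩
    · have := ih y hyD hyT
      omega
    · -- y is in the same row, to the right of x
      rcases Nat.eq_or_lt_of_le h2 with h3 | h3
      · exfalso
        have : x = y := Prod.ext h1.symm h3
        rw [this, hyT] at hTx
        omega
      · exfalso
        have hx' : (x.1, x.2) ∈ D := by simpa using hx
        have hy' : (x.1, y.2) ∈ D := by
          have : (y.1, y.2) ∈ D := by simpa using hyD
          rwa [h1] at this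
        have := row_mono hD hT x.1 x.2 y.2 hx' hy' (le_of_lt h3)
        have hyy : (x.1, y.2) = y := Prod.ext h1.symm rfl
        rw [Prod.mk.eta, hyy, hTx, hyT] at this
        omega

end Aux

section Fill

variable (n k a l : ℕ) (α : ℕ → ℕ)

/-- The explicit lattice filling of `S((a,1^{l-1}), α; k)` witnessing a Schur
function with the maximal number of rows. -/
def fillF : ℕ × ℕ → ℕ := fun x =>
  if x ∈ shapeS n α l (hookPart a l) k then
    if x.1 < stairLen n α then x.1 + stairColHt n α (n - 1 - (x.2 - k)) + 1 - stairLen n α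
    else if x.1 = stairLen n α ∧ x.2 + 1 ≠ a then
      (if x.2 < k then 1 else stairColHt n α (n - 1 - (x.2 - k)) + 1)
    else x.1 + 1
  else 0

/-- The "predecessor cell" map used to verify the lattice property of `fillF`. -/
def phiF : ℕ × ℕ → ℕ × ℕ := fun y =>
  if y.1 = stairLen n α ∧ y.2 + 1 = a then (stairLen n α - 1, k + n - 1)
  else if y.1 = stairLen n α + 1 then (stairLen n α, a - 1)
  else (y.1 - 1, y.2)

variable {n k a l α}

lemma fillF_off {x : ℕ × ℕ} (hx : x ∉ shapeS n α l (hookPart a l) k) :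
    fillF n k a l α x = 0 := by
  simp only [fillF, if_neg hx]

lemma fillF_val_delta {x : ℕ × ℕ} (hx : x ∈ shapeS n α l (hookPart a l) k)
    (h : x.1 < stairLen n α) :
    fillF n k a l α x =
      x.1 + stairColHt n α (n - 1 - (x.2 - k)) + 1 - stairLen n α := by
  simp only [fillF, if_pos hx, if_pos h]

lemma fillF_val_start {x : ℕ × ℕ} (hx : x ∈ shapeS n α l (hookPart a l) k)
    (h1 : x.1 = stairLen n α) (h2 : x.2 + 1 = a) :
    fillF n k a l α x = stairLen n α + 1 := by
  have e1 : ¬ x.1 < stairLen n α := by omega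
  have e2 : ¬ (x.1 = stairLen n α ∧ x.2 + 1 ≠ a) := by tauto
  simp only [fillF, if_pos hx, if_neg e1, if_neg e2]
  omega

lemma fillF_val_mid {x : ℕ × ℕ} (hx : x ∈ shapeS n α l (hookPart a l) k)
    (h1 : x.1 = stairLen n α) (h2 : x.2 + 1 ≠ a) :
    fillF n k a l α x =
      if x.2 < k then 1 else stairColHt n α (n - 1 - (x.2 - k)) + 1 := by
  simp only [fillF, if_pos hx, if_neg (by omega : ¬ x.1 < stairLen n α),
    if_pos (⟨h1, h2⟩ : x.1 = stairLen n α ∧ x.2 + 1 ≠ a)]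

lemma fillF_val_deep {x : ℕ × ℕ} (hx : x ∈ shapeS n α l (hookPart a l) k)
    (h : stairLen n α < x.1) :
    fillF n k a l α x = x.1 + 1 := by
  simp only [fillF, if_pos hx, if_neg (by omega : ¬ x.1 < stairLen n α),
    if_neg (by omega : ¬ (x.1 = stairLen n α ∧ x.2 + 1 ≠ a))]

lemma fillF_isSSYT (hα : IsComposition n α) (ha : 1 ≤ a) (hl : 1 ≤ l)
    (hak : a < n + k) :
    IsSSYT (shapeS n α l (hookPart a l) k) (fillF n k a l α) := by
  set L := stairLen n α with hL
  refine ⟨?_, ?_, ?_⟩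
  · -- positivity
    intro x hx
    have hx' := (mem_shapeS_hook ha hl).mp hx
    rcases hx' with ⟨g1, g2, g3, g4⟩ | ⟨g1, g2⟩ | ⟨g1, g2, g3⟩
    · rw [fillF_val_delta hx g1]; omega
    · by_cases h2 : x.2 + 1 = a
      · rw [fillF_val_start hx g1 h2]; omega
      · rw [fillF_val_mid hx g1 h2]; split_ifs <;> omega
    · rw [fillF_val_deep hx g1]; omega
  · -- rows weakly increase
    intro i j h1 h2
    have h1' := (mem_shapeS_hook ha hl).mp h1
    have h2' := (mem_shapeS_hook ha hl).mp h2
    simp only at h1' h2'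
    rcases h1' with ⟨g1, g2, g3, g4⟩ | ⟨g1, g2⟩ | ⟨g1, g2, g3⟩
    · -- delta row
      rcases h2' with ⟨f1, f2, f3, f4⟩ | ⟨f1, f2⟩ | ⟨f1, f2, f3⟩
      · rw [fillF_val_delta h1 g1, fillF_val_delta h2 f1]
        simp only []
        have hmono : stairColHt n α (n - 1 - (j - k)) ≤
            stairColHt n α (n - 1 - (j + 1 - k)) :=
          stairColHt_anti (by omega)
        omega
      · omega
      · omega
    · -- hook row
      rcases h2' with ⟨f1, f2, f3, f4⟩ | ⟨f1, f2⟩ | ⟨f1, f2, f3⟩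
      · omega
      · -- both in hook row; the left cell is never the start cell
        have hns : j + 1 ≠ a := by omega
        rw [fillF_val_mid h1 g1 hns]
        have hC1 : stairColHt n α (n - 1 - (j - k)) ≤ L := stairColHt_le_stairLen
        by_cases h2s : (j + 1) + 1 = a
        · rw [fillF_val_start h2 f1 h2s]
          simp only []
          split_ifs <;> omega
        · rw [fillF_val_mid h2 f1 h2s]
          simp only []
          have hmono : stairColHt n α (n - 1 - (j - k)) ≤
              stairColHt n α (n - 1 - (j + 1 - k)) :=
            stairColHt_anti (by omega)
          split_ifs <;> omega
      · omega
    · -- deep rows have a single cell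
      omega
  · -- columns strictly increase
    intro i j h1 h2
    have h1' := (mem_shapeS_hook ha hl).mp h1
    have h2' := (mem_shapeS_hook ha hl).mp h2
    simp only at h1' h2'
    rcases h1' with ⟨g1, g2, g3, g4⟩ | ⟨g1, g2⟩ | ⟨g1, g2, g3⟩
    · -- top cell in delta
      rcases h2' with ⟨f1, f2, f3, f4⟩ | ⟨f1, f2⟩ | ⟨f1, f2, f3⟩
      · rw [fillF_val_delta h1 g1, fillF_val_delta h2 f1]
        simp only []
        omega
      · -- bottom cell in hook row
        rw [fillF_val_delta h1 g1]
        have hC1 : stairColHt n α (n - 1 - (j - k)) ≤ L := stairColHt_le_stairLen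
        by_cases h2s : j + 1 = a
        · rw [fillF_val_start h2 f1 h2s]; simp only []; omega
        · rw [fillF_val_mid h2 f1 h2s]
          simp only []
          split_ifs <;> omega
      · omega
    · -- top cell in hook row, bottom cell deep, column 0
      rcases h2' with ⟨f1, f2, f3, f4⟩ | ⟨f1, f2⟩ | ⟨f1, f2, f3⟩
      · omega
      · omega
      · rw [fillF_val_deep h2 f1]
        simp only []
        have hC1 : stairColHt n α (n - 1 - (j - k)) ≤ L := stairColHt_le_stairLen
        by_cases h2s : j + 1 = a
        · rw [fillF_val_start h1 g1 h2s]; omega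
        · rw [fillF_val_mid h1 g1 h2s]
          simp only []
          split_ifs <;> omega
    · -- both deep
      rcases h2' with ⟨f1, f2, f3, f4⟩ | ⟨f1, f2⟩ | ⟨f1, f2, f3⟩
      · omega
      · omega
      · rw [fillF_val_deep h1 g1, fillF_val_deep h2 f1]
        omega

end Fill

section Lattice

variable {n k a l : ℕ} {α : ℕ → ℕ}

lemma n_pos_of_stairLen_pos (h : 0 < stairLen n α) : 0 < n := by
  by_contra hn
  push_neg at hn
  have : n = 0 := by omega
  subst this
  simp [stairLen] at h

lemma phiF_val_start {y : ℕ × ℕ} (h1 : y.1 = stairLen n α) (h2 : y.2 + 1 = a) :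
    phiF n k a α y = (stairLen n α - 1, k + n - 1) := by
  simp only [phiF, if_pos (⟨h1, h2⟩ : y.1 = stairLen n α ∧ y.2 + 1 = a)]

lemma phiF_val_deep1 {y : ℕ × ℕ} (h1 : y.1 = stairLen n α + 1) :
    phiF n k a α y = (stairLen n α, a - 1) := by
  have e1 : ¬ (y.1 = stairLen n α ∧ y.2 + 1 = a) := by omega
  simp only [phiF, if_neg e1, if_pos h1]

lemma phiF_val_else {y : ℕ × ℕ} (h1 : ¬ (y.1 = stairLen n α ∧ y.2 + 1 = a))
    (h2 : y.1 ≠ stairLen n α + 1) :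
    phiF n k a α y = (y.1 - 1, y.2) := by
  simp only [phiF, if_neg h1, if_neg h2]

lemma phiF_spec (hα : IsComposition n α) (ha : 1 ≤ a) (hl : 1 ≤ l) (hak : a < n + k) :
    ∀ y ∈ shapeS n α l (hookPart a l) k, 2 ≤ fillF n k a l α y →
      phiF n k a α y ∈ shapeS n α l (hookPart a l) k ∧
      fillF n k a l α (phiF n k a α y) + 1 = fillF n k a l α y ∧
      (phiF n k a α y).1 < y.1 := by
  set L := stairLen n α with hLdef
  intro y hy h2
  have hy' := (mem_shapeS_hook ha hl).mp hy
  rcases hy' with ⟨g1, g2, g3, g4⟩ | ⟨g1, g2⟩ | ⟨g1, g2, g3⟩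
  · -- delta cell
    have hC : stairColHt n α (n - 1 - (y.2 - k)) ≤ L := stairColHt_le_stairLen
    rw [fillF_val_delta hy g1] at h2
    have hy1 : 1 ≤ y.1 := by omega
    have hphi : phiF n k a α y = (y.1 - 1, y.2) :=
      phiF_val_else (by omega) (by omega)
    rw [hphi]
    have hmem : ((y.1 - 1 : ℕ), y.2) ∈ shapeS n α l (hookPart a l) k := by
      rw [mem_shapeS_hook ha hl]
      exact Or.inl ⟨by omega, by omega, by omega, by simp only []; omega⟩
    refine ⟨hmem, ?_, by omega⟩
    rw [fillF_val_delta hmem (by simp only []; omega), fillF_val_delta hy g1]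
    simp only []
    omega
  · -- hook row
    by_cases hs : y.2 + 1 = a
    · -- start cell
      rw [fillF_val_start hy g1 hs] at h2
      have hL1 : 1 ≤ L := by omega
      have hn : 0 < n := n_pos_of_stairLen_pos (by rw [← hLdef]; omega)
      have hphi : phiF n k a α y = (L - 1, k + n - 1) := phiF_val_start g1 hs
      rw [hphi]
      have hcol : (n : ℕ) - 1 - ((k + n - 1) - k) = 0 := by omega
      have hmem : ((L - 1 : ℕ), k + n - 1) ∈ shapeS n α l (hookPart a l) k := by
        rw [mem_shapeS_hook ha hl]
        refine Or.inl ⟨by omega, by omega, by omega, ?_⟩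
        simp only []
        rw [hcol, stairColHt_zero]
        omega
      refine ⟨hmem, ?_, by omega⟩
      rw [fillF_val_delta hmem (by simp only []; omega), fillF_val_start hy g1 hs]
      simp only []
      rw [hcol, stairColHt_zero]
      omega
    · -- mid cell
      rw [fillF_val_mid hy g1 hs] at h2
      have hk : ¬ y.2 < k := by
        intro hk
        rw [if_pos hk] at h2
        omega
      rw [if_neg hk] at h2
      have hC : stairColHt n α (n - 1 - (y.2 - k)) ≤ L := stairColHt_le_stairLen
      have hphi : phiF n k a α y = (L - 1, y.2) := by
        rw [phiF_val_else (by omega) (by omega), g1]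
      rw [hphi]
      have hmem : ((L - 1 : ℕ), y.2) ∈ shapeS n α l (hookPart a l) k := by
        rw [mem_shapeS_hook ha hl]
        exact Or.inl ⟨by omega, by omega, by omega, by simp only []; omega⟩
      refine ⟨hmem, ?_, by omega⟩
      rw [fillF_val_delta hmem (by simp only []; omega), fillF_val_mid hy g1 hs,
        if_neg hk]
      simp only []
      omega
  · -- deep cell
    by_cases hd : y.1 = L + 1
    · have hphi : phiF n k a α y = (L, a - 1) := phiF_val_deep1 hd
      rw [hphi]
      have hmem : ((L : ℕ), a - 1) ∈ shapeS n α l (hookPart a l) k := by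
        rw [mem_shapeS_hook ha hl]
        exact Or.inr (Or.inl ⟨rfl, by omega⟩)
      refine ⟨hmem, ?_, by omega⟩
      rw [fillF_val_start hmem rfl (by simp only []; omega), fillF_val_deep hy g1]
      omega
    · have hphi : phiF n k a α y = (y.1 - 1, y.2) :=
        phiF_val_else (by omega) hd
      rw [hphi]
      have hmem : ((y.1 - 1 : ℕ), y.2) ∈ shapeS n α l (hookPart a l) k := by
        rw [mem_shapeS_hook ha hl]
        exact Or.inr (Or.inr ⟨by omega, by omega, by simp only []; omega⟩)
      refine ⟨hmem, ?_, by omega⟩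
      rw [fillF_val_deep hmem (by simp only []; omega), fillF_val_deep hy g1]
      simp only []
      omega

lemma phiF_desc (hα : IsComposition n α) (ha : 1 ≤ a) (hl : 1 ≤ l) (hak : a < n + k) :
    ∀ y ∈ shapeS n α l (hookPart a l) k, 2 ≤ fillF n k a l α y →
      (1 ≤ y.1 ∧ y.1 < stairLen n α ∧ phiF n k a α y = (y.1 - 1, y.2)) ∨
      (1 ≤ stairLen n α ∧ 1 ≤ n ∧ y.1 = stairLen n α ∧ y.2 + 1 = a ∧
        phiF n k a α y = (stairLen n α - 1, k + n - 1)) ∨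
      (1 ≤ stairLen n α ∧ y.1 = stairLen n α ∧ k ≤ y.2 ∧ y.2 + 1 < a ∧
        phiF n k a α y = (stairLen n α - 1, y.2)) ∨
      (y.1 = stairLen n α + 1 ∧ y.2 = 0 ∧ phiF n k a α y = (stairLen n α, a - 1)) ∨
      (stairLen n α + 2 ≤ y.1 ∧ y.2 = 0 ∧ phiF n k a α y = (y.1 - 1, 0)) := by
  set L := stairLen n α with hLdef
  intro y hy h2
  have hy' := (mem_shapeS_hook ha hl).mp hy
  rcases hy' with ⟨g1, g2, g3, g4⟩ | ⟨g1, g2⟩ | ⟨g1, g2, g3⟩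
  · have hC : stairColHt n α (n - 1 - (y.2 - k)) ≤ L := stairColHt_le_stairLen
    rw [fillF_val_delta hy g1] at h2
    exact Or.inl ⟨by omega, g1, phiF_val_else (by omega) (by omega)⟩
  · by_cases hs : y.2 + 1 = a
    · rw [fillF_val_start hy g1 hs] at h2
      have hn : 0 < n := n_pos_of_stairLen_pos (by rw [← hLdef]; omega)
      exact Or.inr (Or.inl ⟨by omega, hn, g1, hs, phiF_val_start g1 hs⟩)
    · rw [fillF_val_mid hy g1 hs] at h2
      have hk : ¬ y.2 < k := by
        intro hk
        rw [if_pos hk] at h2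
        omega
      rw [if_neg hk] at h2
      have hC : stairColHt n α (n - 1 - (y.2 - k)) ≤ L := stairColHt_le_stairLen
      refine Or.inr (Or.inr (Or.inl ⟨by omega, g1, by omega, by omega, ?_⟩))
      rw [phiF_val_else (by omega) (by omega), g1]
  · by_cases hd : y.1 = L + 1
    · exact Or.inr (Or.inr (Or.inr (Or.inl ⟨hd, g3, phiF_val_deep1 hd⟩)))
    · refine Or.inr (Or.inr (Or.inr (Or.inr ⟨by omega, g3, ?_⟩)))
      rw [phiF_val_else (by omega) hd, g3]

lemma phiF_inj (hα : IsComposition n α) (ha : 1 ≤ a) (hl : 1 ≤ l) (hak : a < n + k) :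
    ∀ y ∈ shapeS n α l (hookPart a l) k, ∀ y' ∈ shapeS n α l (hookPart a l) k,
      2 ≤ fillF n k a l α y → phiF n k a α y = phiF n k a α y' →
      2 ≤ fillF n k a l α y' → y = y' := by
  intro y hy y' hy' h2 heq h2'
  rcases phiF_desc hα ha hl hak y hy h2 with
    ⟨p1, p2, pphi⟩ | ⟨p1, p2, p3, p4, pphi⟩ | ⟨p1, p2, p3, p4, pphi⟩ |
    ⟨p1, p2, pphi⟩ | ⟨p1, p2, pphi⟩ <;>
  rcases phiF_desc hα ha hl hak y' hy' h2' with
    ⟨q1, q2, qphi⟩ | ⟨q1, q2, q3, q4, qphi⟩ | ⟨q1, q2, q3, q4, qphi⟩ |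
    ⟨q1, q2, qphi⟩ | ⟨q1, q2, qphi⟩ <;>
  · rw [pphi, qphi] at heq
    simp only [Prod.mk.injEq] at heq
    obtain ⟨e1, e2⟩ := heq
    first
    | exact Prod.ext (by omega) (by omega)
    | (exfalso; omega)

lemma fillF_isLattice (hα : IsComposition n α) (ha : 1 ≤ a) (hl : 1 ≤ l)
    (hak : a < n + k) :
    IsLattice (shapeS n α l (hookPart a l) k) (fillF n k a l α) := by
  intro x hx v
  classical
  refine Finset.card_le_card_of_injOn (phiF n k a α) ?_ ?_
  · intro y hy
    simp only [Finset.coe_filter, Set.mem_setOf_eq] at hy ⊢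
    obtain ⟨hyD, hyR, hyV⟩ := hy
    obtain ⟨m1, m2, m3⟩ := phiF_spec hα ha hl hak y hyD (by omega)
    refine ⟨m1, ?_, by omega⟩
    have hle : y.1 ≤ x.1 := by
      rcases hyR with h | ⟨h, _⟩
      · omega
      · omega
    exact Or.inl (by omega)
  · intro y hy y' hy' heq
    simp only [Finset.coe_filter, Set.mem_setOf_eq] at hy hy'
    exact phiF_inj hα ha hl hak y hy.1 y' hy'.1 (by omega) heq (by omega)

end Lattice

section Assemble

lemma fillF_mem_latticeSSYTs {n k a l : ℕ} {α : ℕ → ℕ} (hα : IsComposition n α)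
    (ha : 1 ≤ a) (hl : 1 ≤ l) (hak : a < n + k) :
    fillF n k a l α ∈ LatticeSSYTs (shapeS n α l (hookPart a l) k)
      (content (shapeS n α l (hookPart a l) k) (fillF n k a l α)) :=
  ⟨⟨fillF_isSSYT hα ha hl hak, fun _ hx => fillF_off hx, rfl⟩,
    fillF_isLattice hα ha hl hak⟩

lemma latticeSSYTs_finite {D : Diagram} (hD : RowsInterval D) {B : ℕ}
    (hB : ∀ x ∈ D, x.1 + 1 ≤ B) (c : ℕ → ℕ) : (LatticeSSYTs D c).Finite := by
  classical
  have key : ∀ T ∈ LatticeSSYTs D c, ∀ x, T x ≤ B := by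
    intro T hT x
    by_cases hx : x ∈ D
    · rcases Nat.eq_zero_or_pos (T x) with h | h
      · omega
      · have h1 := entry_le_row hD hT.1.1 hT.2 (T x - 1) x hx (by omega)
        have h2 := hB x hx
        omega
    · rw [hT.1.2.1 x hx]
      omega
  apply Set.Finite.of_finite_image
    (f := fun (T : (ℕ × ℕ) → ℕ) (x : {x // x ∈ D}) => (⟨min (T x.1) B, by omega⟩ : Fin (B + 1)))
  · exact Set.toFinite _
  · intro T hT T' hT' hEq
    funext x
    by_cases hx : x ∈ D
    · have h1 := congrFun hEq ⟨x, hx⟩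
      simp only [Fin.mk.injEq] at h1
      have b1 : T x ≤ B := key T hT x
      have b2 : T' x ≤ B := key T' hT' x
      rw [Nat.min_eq_left b1, Nat.min_eq_left b2] at h1
      exact h1
    · rw [hT.1.2.1 x hx, hT'.1.2.1 x hx]

lemma lrCount_eq_zero {D : Diagram} (hD : RowsInterval D) {R : ℕ}
    (hR : ∀ x ∈ D, x.1 < R) {c : ℕ → ℕ} {w : ℕ} (hw : R < w) (hc : 0 < c w) :
    lrCount D c = 0 := by
  have hempty : LatticeSSYTs D c = ∅ := by
    ext T
    simp only [Set.mem_empty_iff_false, iff_false]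
    intro hT
    obtain ⟨⟨hssyt, hoff, hcont⟩, hlat⟩ := hT
    have hcw : content D T w = c w := congrFun hcont w
    simp only [content] at hcw
    have hpos : 0 < (D.filter fun x => T x = w).card := by omega
    obtain ⟨x, hx⟩ := Finset.card_pos.mp hpos
    rw [Finset.mem_filter] at hx
    have h1 := entry_le_row hD hssyt hlat (w - 1) x hx.1 (by omega)
    have h2 := hR x hx.1
    omega
  rw [lrCount, hempty, Set.ncard_empty]

end Assemble


/-- For distinct hooks `λ, μ` of size `h ≤ n + k` with arm lengths
`λ_a < μ_a ≤ ⌈h/2⌉` and `0 ≤ k ≤ h`, the difference `s_{S(μ,α;k)} − s_{S(λ,α;k)}`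
is not Schur-positive; indeed some `s_ν` occurs in `s_{S(λ,α;k)}` but not in
`s_{S(μ,α;k)}`. -/
theorem antichain_one (n k h la ll ma ml : ℕ) (α : ℕ → ℕ) (hα : IsComposition n α)
    (hla : 1 ≤ la) (hll : 1 ≤ ll) (hma : 1 ≤ ma) (hml : 1 ≤ ml)
    (hsl : la + ll = h + 1) (hsm : ma + ml = h + 1)
    (hlt : la < ma) (hhalf : ma ≤ (h + 1) / 2)
    (hh : h ≤ n + k) (hkh : k ≤ h) :
    ¬ SchurPos (shapeS n α ml (hookPart ma ml) k) (shapeS n α ll (hookPart la ll) k) ∧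
      ∃ c : ℕ → ℕ, 0 < lrCount (shapeS n α ll (hookPart la ll) k) c ∧
        lrCount (shapeS n α ml (hookPart ma ml) k) c = 0 := by
  have hll2 : 2 ≤ ll := by omega
  have hlak : la < n + k := by omega
  set L := stairLen n α with hLdef
  set Sl := shapeS n α ll (hookPart la ll) k with hSl
  set Sm := shapeS n α ml (hookPart ma ml) k with hSm
  set c := content Sl (fillF n k la ll α) with hc
  have hmemT : fillF n k la ll α ∈ LatticeSSYTs Sl c :=
    fillF_mem_latticeSSYTs hα hla hll hlak
  have hcw : 0 < c (L + ll) := by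
    have hz : ((L + ll - 1 : ℕ), 0) ∈ Sl := by
      rw [hSl, mem_shapeS_hook hla hll]
      exact Or.inr (Or.inr ⟨by omega, by omega, rfl⟩)
    have hv : fillF n k la ll α (L + ll - 1, 0) = L + ll := by
      rw [fillF_val_deep (by rw [hSl] at hz; exact hz) (by simp only []; omega)]
      simp only []
      omega
    rw [hc]
    simp only [content]
    exact Finset.card_pos.mpr ⟨(L + ll - 1, 0), Finset.mem_filter.mpr ⟨hz, hv⟩⟩
  have hfin : (LatticeSSYTs Sl c).Finite := by
    refine latticeSSYTs_finite (rowsInterval_shapeS_hook hla hll) (B := L + ll) ?_ c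
    intro x hx
    have := row_lt_shapeS_hook hla hll hx
    omega
  have hpos : 0 < lrCount Sl c := by
    rw [lrCount, Set.ncard_pos hfin]
    exact ⟨_, hmemT⟩
  have hzero : lrCount Sm c = 0 := by
    refine lrCount_eq_zero (rowsInterval_shapeS_hook hma hml) (R := L + ml) ?_
      (by omega : L + ml < L + ll) hcw
    intro x hx
    exact row_lt_shapeS_hook hma hml hx
  exact ⟨fun hsp => by have := hsp c; omega, c, hpos, hzero⟩

end SchurStair
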